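/- There is a constant c > 0 such that for all m ≥ 1 and all l with 0 ≤ l ≤ 2m−1, ∑_{j=0}^{2m} sin ψ_j · ( 1/|cos ψ_j − cos ξ_l| + sin ψ_j/((2m+1)(cos ψ_j − cos ξ_l)²) ) ≤ c·(2m+1)·log(m+2), where ψ_j = (2j+1)π/(4m+2) and ξ_l = (l+1)π/(2m+1). -/

import Mathlib

set_option maxHeartbeats 1000000
open Finset Real

lemma sin_le_two_sin_avg {ψ ξ : ℝ} (hψ0 : 0 ≤ ψ) (hψ : ψ ≤ π) (hξ0 : 0 ≤ ξ) (hξ : ξ ≤ π) :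
    Real.sin ψ ≤ 2 * Real.sin ((ψ + ξ) / 2) := by
  have hpi := Real.pi_pos
  have h1 : Real.sin ψ = 2 * Real.sin (ψ/2) * Real.cos (ψ/2) := by
    rw [show ψ = 2 * (ψ/2) by ring, Real.sin_two_mul]; ring_nf
  have h2 : Real.sin ((ψ + ξ)/2)
      = Real.sin (ψ/2) * Real.cos (ξ/2) + Real.cos (ψ/2) * Real.sin (ξ/2) := by
    rw [show (ψ + ξ)/2 = ψ/2 + ξ/2 by ring, Real.sin_add]
  have hs0 : 0 ≤ Real.sin (ψ/2) :=
    Real.sin_nonneg_of_nonneg_of_le_pi (by linarith) (by linarith)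
  have hc0 : 0 ≤ Real.cos (ψ/2) :=
    Real.cos_nonneg_of_mem_Icc ⟨by linarith, by linarith⟩
  have hs1 : 0 ≤ Real.sin (ξ/2) :=
    Real.sin_nonneg_of_nonneg_of_le_pi (by linarith) (by linarith)
  have hc1 : 0 ≤ Real.cos (ξ/2) :=
    Real.cos_nonneg_of_mem_Icc ⟨by linarith, by linarith⟩
  rcases le_total ξ ψ with h | h
  · have hcc : Real.cos (ψ/2) ≤ Real.cos (ξ/2) :=
      Real.cos_le_cos_of_nonneg_of_le_pi (by linarith) (by linarith) (by linarith)
    nlinarith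
  · have hss : Real.sin (ψ/2) ≤ Real.sin (ξ/2) :=
      Real.sin_le_sin_of_le_of_le_pi_div_two (by linarith) (by linarith) (by linarith)
    nlinarith

lemma sum_inv_odd_le (M n : ℕ) (h : M ≤ n) :
    ∑ i ∈ range M, 1/(2*(i:ℝ)+1) ≤ 1 + Real.log n := by
  have step1 : ∑ i ∈ range M, 1/(2*(i:ℝ)+1) ≤ ∑ i ∈ range M, 1/((i:ℝ)+1) := by
    apply Finset.sum_le_sum
    intro i _
    have h1 : (0:ℝ) < (i:ℝ) + 1 := by positivity
    gcongr
    linarith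
  have step2 : ∑ i ∈ range M, 1/((i:ℝ)+1) ≤ ∑ i ∈ range n, 1/((i:ℝ)+1) := by
    apply Finset.sum_le_sum_of_subset_of_nonneg (Finset.range_subset_range.mpr h)
    intro i _ _; positivity
  have step3 : ∑ i ∈ range n, 1/((i:ℝ)+1) = ((harmonic n : ℚ) : ℝ) := by
    rw [harmonic]
    push_cast
    simp [one_div]
  calc ∑ i ∈ range M, 1/(2*(i:ℝ)+1) ≤ ∑ i ∈ range n, 1/((i:ℝ)+1) := step1.trans step2
    _ = ((harmonic n : ℚ) : ℝ) := step3
    _ ≤ 1 + Real.log n := harmonic_le_one_add_log n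

lemma sum_inv_abs_odd (m l : ℕ) (hl : l + 1 ≤ 2*m+1) :
    ∑ j ∈ range (2*m+1), 1/|2*(l:ℝ)+1-2*(j:ℝ)| ≤ 2*(1 + Real.log (2*m+1)) := by
  rw [Finset.range_eq_Ico, ← Finset.sum_Ico_consecutive _ (Nat.zero_le (l+1)) hl]
  have h1 : ∑ j ∈ Finset.Ico 0 (l+1), 1/|2*(l:ℝ)+1-2*(j:ℝ)| ≤ 1 + Real.log (2*m+1) := by
    rw [show Finset.Ico 0 (l+1) = range (l+1) by rw [Finset.range_eq_Ico]]
    rw [← Finset.sum_range_reflect (fun j => 1/|2*(l:ℝ)+1-2*(j:ℝ)|) (l+1)]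
    have e : ∀ j ∈ range (l+1),
        1/|2*(l:ℝ)+1-2*((l+1-1-j : ℕ):ℝ)| = 1/(2*(j:ℝ)+1) := by
      intro j hj
      have hjl : j ≤ l := Nat.lt_succ_iff.mp (Finset.mem_range.mp hj)
      have hc : ((l+1-1-j : ℕ):ℝ) = (l:ℝ) - (j:ℝ) := by
        have he : l + 1 - 1 - j = l - j := by omega
        rw [he, Nat.cast_sub hjl]
      rw [hc, show 2*(l:ℝ)+1-2*((l:ℝ)-(j:ℝ)) = 2*(j:ℝ)+1 by ring,
        abs_of_pos (by positivity)]
    rw [Finset.sum_congr rfl e]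
    exact_mod_cast sum_inv_odd_le (l+1) (2*m+1) hl
  have h2 : ∑ j ∈ Finset.Ico (l+1) (2*m+1), 1/|2*(l:ℝ)+1-2*(j:ℝ)| ≤ 1 + Real.log (2*m+1) := by
    rw [Finset.sum_Ico_eq_sum_range]
    have e : ∀ i ∈ range (2*m+1-(l+1)),
        1/|2*(l:ℝ)+1-2*((l+1+i : ℕ):ℝ)| = 1/(2*(i:ℝ)+1) := by
      intro i _
      push_cast
      rw [show 2*(l:ℝ)+1-2*((l:ℝ)+1+(i:ℝ)) = -(2*(i:ℝ)+1) by ring, abs_neg,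
        abs_of_pos (by positivity)]
    rw [Finset.sum_congr rfl e]
    exact_mod_cast sum_inv_odd_le (2*m+1-(l+1)) (2*m+1) (by omega)
  linarith

/-- Key kernel-sum estimate: there is a constant `c > 0` such that for all `m ≥ 1` and
all `l` with `0 ≤ l ≤ 2m−1`,
`∑_{j=0}^{2m} sin ψ_j (1/|cos ψ_j − cos ξ_l| + sin ψ_j/((2m+1)(cos ψ_j − cos ξ_l)²))
  ≤ c (2m+1) log(m+2)`,
where `ψ_j = (2j+1)π/(4m+2)` and `ξ_l = (l+1)π/(2m+1)`. -/
theorem kernel_sum_estimate :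
    ∃ c : ℝ, 0 < c ∧ ∀ m : ℕ, 1 ≤ m → ∀ l : ℕ, l ≤ 2 * m - 1 →
      (∑ j ∈ range (2 * m + 1),
          Real.sin ((2 * (j : ℝ) + 1) * Real.pi / (4 * m + 2)) *
            (1 / |Real.cos ((2 * (j : ℝ) + 1) * Real.pi / (4 * m + 2)) -
                Real.cos (((l : ℝ) + 1) * Real.pi / (2 * m + 1))| +
              Real.sin ((2 * (j : ℝ) + 1) * Real.pi / (4 * m + 2)) /
                ((2 * (m : ℝ) + 1) *
                  (Real.cos ((2 * (j : ℝ) + 1) * Real.pi / (4 * m + 2)) -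
                    Real.cos (((l : ℝ) + 1) * Real.pi / (2 * m + 1))) ^ 2))) ≤
        c * (2 * (m : ℝ) + 1) * Real.log (m + 2) := by
  refine ⟨36, by norm_num, ?_⟩
  intro m hm l hl
  have hpi := Real.pi_pos
  have hm1 : (1:ℝ) ≤ (m:ℝ) := by exact_mod_cast hm
  set N : ℝ := 2 * (m : ℝ) + 1 with hNdef
  have hN0 : (0:ℝ) < N := by rw [hNdef]; linarith
  clear_value N
  set θ : ℝ := π / (2 * N) with hθdef
  have hθ0 : 0 < θ := by rw [hθdef]; exact div_pos hpi (by linarith)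
  have hπθ : π = 2 * N * θ := by rw [hθdef]; field_simp
  clear_value θ
  have hlm : l + 1 ≤ 2 * m := by omega
  have hlR : (l:ℝ) + 1 ≤ 2 * (m:ℝ) := by exact_mod_cast hlm
  have key : ∀ j ∈ range (2*m+1),
      Real.sin ((2 * (j : ℝ) + 1) * Real.pi / (4 * m + 2)) *
            (1 / |Real.cos ((2 * (j : ℝ) + 1) * Real.pi / (4 * m + 2)) -
                Real.cos (((l : ℝ) + 1) * Real.pi / N)| +
              Real.sin ((2 * (j : ℝ) + 1) * Real.pi / (4 * m + 2)) /
                (N *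
                  (Real.cos ((2 * (j : ℝ) + 1) * Real.pi / (4 * m + 2)) -
                    Real.cos (((l : ℝ) + 1) * Real.pi / N)) ^ 2)) ≤
      6 * N * (1/|2*(l:ℝ)+1-2*(j:ℝ)|) := by
    intro j hj
    have hj2m : (j:ℝ) ≤ 2*(m:ℝ) := by
      have h' : j ≤ 2*m := by
        have := Finset.mem_range.mp hj; omega
      exact_mod_cast h'
    set ψ : ℝ := (2*(j:ℝ)+1) * θ with hψdef
    set ξ : ℝ := (2*(l:ℝ)+2) * θ with hξdef
    have eψ : (2 * (j : ℝ) + 1) * Real.pi / (4 * (m:ℝ) + 2) = ψ := by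
      rw [hψdef, hθdef, hNdef]; ring
    have eξ : ((l : ℝ) + 1) * Real.pi / N = ξ := by
      rw [hξdef, hθdef]
      field_simp
    rw [eψ, eξ]
    set k : ℝ := 2*(l:ℝ)+1-2*(j:ℝ) with hkdef
    set x : ℝ := (ξ - ψ)/2 with hxdef
    have hxk : x = k * θ / 2 := by rw [hxdef, hξdef, hψdef, hkdef]; ring
    set S : ℝ := Real.sin ((ψ + ξ)/2) with hSdef
    set E : ℝ := |Real.sin x| with hEdef
    clear_value ψ ξ k x S E
    have hψ0 : 0 < ψ := by
      rw [hψdef]; exact mul_pos (by positivity) hθ0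
    have hψπ : ψ ≤ π := by
      have hc : 2*(j:ℝ)+1 ≤ 2*N := by rw [hNdef]; linarith
      rw [hψdef, hπθ]
      exact mul_le_mul_of_nonneg_right hc hθ0.le
    have hξ0 : 0 < ξ := by
      rw [hξdef]; exact mul_pos (by positivity) hθ0
    have hξπ : ξ ≤ π := by
      have hc : 2*(l:ℝ)+2 ≤ 2*N := by rw [hNdef]; linarith
      rw [hξdef, hπθ]
      exact mul_le_mul_of_nonneg_right hc hθ0.le
    have hk1 : 1 ≤ |k| := by
      rcases le_or_gt j l with h | h
      · have hjl : (j:ℝ) ≤ (l:ℝ) := by exact_mod_cast h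
        rw [abs_of_pos (by rw [hkdef]; linarith)]; rw [hkdef]; linarith
      · have hjl : (l:ℝ) + 1 ≤ (j:ℝ) := by exact_mod_cast h
        rw [abs_of_neg (by rw [hkdef]; linarith)]; rw [hkdef]; linarith
    have hk2 : |k| ≤ 2*N - 1 := by
      rw [abs_le]; constructor
      · rw [hkdef, hNdef]; linarith
      · rw [hkdef, hNdef]; linarith
    have hk0 : (0:ℝ) < |k| := by linarith
    have hS0 : 0 < S := by
      rw [hSdef]
      apply Real.sin_pos_of_pos_of_lt_pi
      · linarith
      · have hc : (2*(j:ℝ)+1) + (2*(l:ℝ)+2) < 4*N := by rw [hNdef]; linarith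
        rw [hψdef, hξdef, hπθ]
        linarith [mul_lt_mul_of_pos_right hc hθ0]
    have hxabs : |x| = |k| * θ / 2 := by
      rw [hxk, abs_div, abs_mul, abs_of_pos hθ0, abs_of_pos (by norm_num : (0:ℝ) < 2)]
    have hxhalf : |x| ≤ π / 2 := by
      rw [hxabs, hπθ]
      linarith [mul_le_mul_of_nonneg_right (hk2.trans (by linarith : 2*N-1 ≤ 2*N)) hθ0.le]
    have hE_lb : |k| / (2*N) ≤ E := by
      have hjrd : 2/π * |x| ≤ Real.sin |x| := Real.mul_le_sin (abs_nonneg x) hxhalf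
      have hsx : Real.sin |x| = E := by
        rcases le_or_gt 0 x with h | h
        · have hxx : |x| = x := abs_of_nonneg h
          rw [hxx, hEdef, abs_of_nonneg
            (Real.sin_nonneg_of_nonneg_of_le_pi h (by rw [← hxx]; linarith))]
        · have hxx : |x| = -x := abs_of_neg h
          have hnn : 0 ≤ Real.sin (-x) :=
            Real.sin_nonneg_of_nonneg_of_le_pi (by linarith) (by rw [← hxx]; linarith)
          rw [hxx, hEdef, Real.sin_neg,
            abs_of_nonpos (by rw [Real.sin_neg] at hnn; linarith)]
      have e2 : 2/π * |x| = |k| / (2*N) := by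
        rw [hxabs, hθdef]
        have h1 : (2*N:ℝ) ≠ 0 := by linarith
        field_simp
      rw [← hsx, ← e2]; exact hjrd
    have hE0 : 0 < E :=
      lt_of_lt_of_le (div_pos hk0 (by linarith : (0:ℝ) < 2*N)) hE_lb
    have hSE : 0 < 2*S*E := mul_pos (mul_pos two_pos hS0) hE0
    have hS2 : 0 < S^2 := pow_pos hS0 2
    have hE2 : 0 < E^2 := pow_pos hE0 2
    have hcos : Real.cos ψ - Real.cos ξ = 2 * S * Real.sin x := by
      rw [Real.cos_sub_cos, hSdef, hxdef,
        show (ψ - ξ)/2 = -((ξ - ψ)/2) by ring, Real.sin_neg]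
      ring
    have habs : |Real.cos ψ - Real.cos ξ| = 2 * S * E := by
      rw [hcos, abs_mul, abs_mul, abs_of_pos hS0, hEdef, abs_two]
    have hsq : (Real.cos ψ - Real.cos ξ)^2 = 4 * S^2 * E^2 := by
      rw [hcos, hEdef, sq_abs]; ring
    have hsinle : Real.sin ψ ≤ 2 * S := by
      rw [hSdef]; exact sin_le_two_sin_avg hψ0.le hψπ hξ0.le hξπ
    have hsin0 : 0 ≤ Real.sin ψ :=
      Real.sin_nonneg_of_nonneg_of_le_pi hψ0.le hψπ
    rw [habs, hsq]
    have hb1 : Real.sin ψ * (1 / (2*S*E)) ≤ 2*N/|k| := by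
      have h1 : Real.sin ψ * (1 / (2*S*E)) ≤ 2*S * (1/(2*S*E)) :=
        mul_le_mul_of_nonneg_right hsinle (one_div_nonneg.mpr hSE.le)
      have h2 : 2*S * (1/(2*S*E)) = 1/E := by
        rw [mul_one_div, div_eq_div_iff hSE.ne' hE0.ne']; ring
      have h3 : 1/E ≤ 2*N/|k| := by
        rw [div_le_div_iff₀ hE0 hk0]
        have h4 := (div_le_iff₀ (by linarith : (0:ℝ) < 2*N)).mp hE_lb
        linarith
      linarith
    have hb2 : Real.sin ψ * (Real.sin ψ / (N * (4 * S^2 * E^2))) ≤ 4*N/|k| := by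
      have hden : (0:ℝ) < 4*N*S^2*E^2 :=
        mul_pos (mul_pos (mul_pos (by norm_num : (0:ℝ) < 4) hN0) hS2) hE2
      have hNE2 : (0:ℝ) < N*E^2 := mul_pos hN0 hE2
      have h1 : Real.sin ψ * (Real.sin ψ / (N * (4 * S^2 * E^2)))
          = Real.sin ψ^2 / (4*N*S^2*E^2) := by ring
      have h2 : Real.sin ψ^2 ≤ 4*S^2 := by
        linarith [mul_le_mul hsinle hsinle hsin0 (by linarith : (0:ℝ) ≤ 2*S)]
      have h3 : Real.sin ψ^2 / (4*N*S^2*E^2) ≤ (4*S^2) / (4*N*S^2*E^2) :=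
        div_le_div_of_nonneg_right h2 hden.le
      have h4 : (4*S^2) / (4*N*S^2*E^2) = 1/(N*E^2) := by
        rw [div_eq_div_iff hden.ne' hNE2.ne']; ring
      have h5 : 1/(N*E^2) ≤ 4*N/(|k|^2) := by
        rw [div_le_div_iff₀ hNE2 (pow_pos hk0 2)]
        have h6 : |k| ≤ E * (2*N) := (div_le_iff₀ (by linarith : (0:ℝ) < 2*N)).mp hE_lb
        linarith [mul_le_mul h6 h6 (abs_nonneg k) (mul_nonneg hE0.le (by linarith : (0:ℝ) ≤ 2*N))]
      have h7 : 4*N/(|k|^2) ≤ 4*N/|k| :=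
        div_le_div_of_nonneg_left (by linarith) hk0
          (by linarith [mul_le_mul_of_nonneg_right hk1 (abs_nonneg k)])
      calc Real.sin ψ * (Real.sin ψ / (N * (4 * S^2 * E^2)))
          = Real.sin ψ^2 / (4*N*S^2*E^2) := h1
        _ ≤ (4*S^2) / (4*N*S^2*E^2) := h3
        _ = 1/(N*E^2) := h4
        _ ≤ 4*N/(|k|^2) := h5
        _ ≤ 4*N/|k| := h7
    calc Real.sin ψ * (1 / (2*S*E) + Real.sin ψ / (N * (4 * S^2 * E^2)))
        = Real.sin ψ * (1 / (2*S*E)) + Real.sin ψ * (Real.sin ψ / (N * (4 * S^2 * E^2))) := by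
          ring
      _ ≤ 2*N/|k| + 4*N/|k| := add_le_add hb1 hb2
      _ = 6 * N * (1/|k|) := by ring
  have step1 := Finset.sum_le_sum key
  have step2 : ∑ j ∈ range (2*m+1), 6 * N * (1/|2*(l:ℝ)+1-2*(j:ℝ)|)
      ≤ 6 * N * (2*(1 + Real.log (2*(m:ℝ)+1))) := by
    rw [← Finset.mul_sum]
    have hsum := sum_inv_abs_odd m l (by omega)
    exact mul_le_mul_of_nonneg_left hsum (by linarith)
  have step3 : 6 * N * (2*(1 + Real.log (2*(m:ℝ)+1))) ≤ 36 * N * Real.log ((m:ℝ) + 2) := by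
    have hL1 : (1:ℝ) ≤ Real.log ((m:ℝ)+2) := by
      have he : Real.exp 1 ≤ (m:ℝ)+2 := by
        linarith [Real.exp_one_lt_d9]
      calc (1:ℝ) = Real.log (Real.exp 1) := (Real.log_exp 1).symm
        _ ≤ Real.log ((m:ℝ)+2) := Real.log_le_log (Real.exp_pos 1) he
    have hL2 : Real.log (2*(m:ℝ)+1) ≤ 2 * Real.log ((m:ℝ)+2) := by
      have hle : 2*(m:ℝ)+1 ≤ ((m:ℝ)+2)^2 := by
        linarith [sq_nonneg ((m:ℝ)+1)]
      calc Real.log (2*(m:ℝ)+1) ≤ Real.log (((m:ℝ)+2)^2) :=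
            Real.log_le_log (by linarith) hle
        _ = 2 * Real.log ((m:ℝ)+2) := by
            rw [Real.log_pow]; push_cast; ring
    have hmain : 2*(1 + Real.log (2*(m:ℝ)+1)) ≤ 6 * Real.log ((m:ℝ)+2) := by linarith
    have hfin := mul_le_mul_of_nonneg_left hmain (show (0:ℝ) ≤ 6*N by linarith)
    linarith [hfin]
  exact le_trans step1 (le_trans step2 step3)
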